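/- Let p be a strictly positive probability distribution on [m] with m ≥ 2 and set p_{i|ij} = p_i/(p_i + p_j) for i ≠ j. Then the point W(p) ∈ ℝ^m with coordinates W_i(p) = ∑_{j ≠ i} p_{i|ij} lies in the permutohedron P_{m−1} = conv{(σ(1)−1,...,σ(m)−1) : σ ∈ S_m}, and ∑_i W_i(p) = m(m−1)/2. -/

import Mathlib

open Finset Pointwise

/-- The `W` vector restricted to a finset `s`: coordinate `i` is
`∑_{j ∈ s, j ≠ i} p i / (p i + p j)` if `i ∈ s`, and `0` otherwise. -/
private noncomputable def Wfun {m : ℕ} (p : Fin m → ℝ) (s : Finset (Fin m)) : Fin m → ℝ :=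
  fun i => if i ∈ s then ∑ j ∈ s.erase i, p i / (p i + p j) else 0

/-- Vertices of the "permutohedron on `s`": vectors that enumerate `{0, …, s.card - 1}`
on `s` and vanish off `s`. -/
private def permSet {m : ℕ} (s : Finset (Fin m)) : Set (Fin m → ℝ) :=
  {x | ∃ f : Fin m → ℕ, Set.BijOn f ↑s (Set.Iio s.card) ∧
        (∀ i ∈ s, x i = f i) ∧ ∀ i ∉ s, x i = 0}

private lemma key {m : ℕ} (p : Fin m → ℝ) (hp : ∀ i, 0 < p i) :
    ∀ s : Finset (Fin m), Wfun p s ∈ convexHull ℝ (permSet s) := by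
  have hpp : ∀ i j : Fin m, p i + p j ≠ 0 := fun i j => (add_pos (hp i) (hp j)).ne'
  intro s
  induction s using Finset.strongInduction with
  | _ s ih =>
    rcases s.eq_empty_or_nonempty with rfl | hs
    · apply subset_convexHull
      refine ⟨fun _ => 0, ?_, ?_, ?_⟩
      · have h0 : Set.Iio (0:ℕ) = ∅ := by ext x; simp
        simp only [Finset.card_empty, Finset.coe_empty, h0]
        exact Set.bijOn_empty _
      · intro i hi; simp at hi
      · intro i _; simp [Wfun]
    -- inductive step
    · have hS : 0 < ∑ j ∈ s, p j := Finset.sum_pos (fun j _ => hp j) hs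
      set S := ∑ j ∈ s, p j with hSdef
      -- the extreme-ish points
      set z : Fin m → Fin m → ℝ := fun a i =>
        if i = a then ((s.card - 1 : ℕ) : ℝ) else Wfun p (s.erase a) i with hz
      have hzmem : ∀ a ∈ s, z a ∈ convexHull ℝ (permSet s) := by
        intro a ha
        set v : Fin m → ℝ := fun i => if i = a then ((s.card - 1 : ℕ) : ℝ) else 0 with hv
        have hxa : z a = v +ᵥ Wfun p (s.erase a) := by
          funext i
          by_cases h : i = a
          · subst h; simp [hz, hv, Wfun, Finset.notMem_erase]
          · simp [hz, hv, h]
        have h1 : z a ∈ v +ᵥ convexHull ℝ (permSet (s.erase a)) := by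
          rw [hxa]
          exact Set.vadd_mem_vadd_set (ih _ (Finset.erase_ssubset ha))
        rw [← convexHull_vadd] at h1
        refine convexHull_mono ?_ h1
        rintro _ ⟨x, ⟨f, hbij, hxs, hxo⟩, rfl⟩
        have hcard : (s.erase a).card = s.card - 1 := Finset.card_erase_of_mem ha
        have hcpos : 1 ≤ s.card := Finset.card_pos.mpr hs
        have hmemE : ∀ {i : Fin m}, i ∈ s → i ≠ a → i ∈ (↑(s.erase a) : Set (Fin m)) := by
          intro i hi hia
          exact Finset.mem_coe.mpr (Finset.mem_erase.mpr ⟨hia, hi⟩)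
        have hflt : ∀ {i : Fin m}, i ∈ s → i ≠ a → f i < s.card - 1 := by
          intro i hi hia
          have h := hbij.mapsTo (hmemE hi hia)
          rw [hcard] at h
          exact Set.mem_Iio.mp h
        refine ⟨Function.update f a (s.card - 1), ⟨?_, ?_, ?_⟩, ?_, ?_⟩
        · -- MapsTo
          intro i hi
          have hi' : i ∈ s := Finset.mem_coe.mp hi
          by_cases hia : i = a
          · rw [hia, Function.update_self]
            exact Set.mem_Iio.mpr (by omega)
          · rw [Function.update_of_ne hia]
            exact Set.mem_Iio.mpr (by have := hflt hi' hia; omega)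
        · -- InjOn
          intro i hi j hj hij
          have hi' : i ∈ s := Finset.mem_coe.mp hi
          have hj' : j ∈ s := Finset.mem_coe.mp hj
          by_cases hia : i = a <;> by_cases hja : j = a
          · rw [hia, hja]
          · exfalso
            rw [hia, Function.update_self, Function.update_of_ne hja] at hij
            have := hflt hj' hja
            omega
          · exfalso
            rw [hja, Function.update_self, Function.update_of_ne hia] at hij
            have := hflt hi' hia
            omega
          · rw [Function.update_of_ne hia, Function.update_of_ne hja] at hij
            exact hbij.injOn (hmemE hi' hia) (hmemE hj' hja) hij
        · -- SurjOn
          intro k hk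
          have hk' : k < s.card := Set.mem_Iio.mp hk
          by_cases hkn : k = s.card - 1
          · exact ⟨a, Finset.mem_coe.mpr ha, by rw [Function.update_self, hkn]⟩
          · have hkI : k ∈ Set.Iio (s.erase a).card := Set.mem_Iio.mpr (by omega)
            obtain ⟨i, hi, hfi⟩ := hbij.surjOn hkI
            have hi' : i ∈ s.erase a := Finset.mem_coe.mp hi
            have hia : i ≠ a := (Finset.mem_erase.mp hi').1
            exact ⟨i, Finset.mem_coe.mpr (Finset.mem_of_mem_erase hi'),
              by rw [Function.update_of_ne hia]; exact hfi⟩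
        · -- values on s
          intro i hi
          by_cases hia : i = a
          · rw [hia]
            have hxa0 : x a = 0 := hxo a (Finset.notMem_erase a s)
            simp [hv, hxa0]
          · have hie : i ∈ s.erase a := Finset.mem_erase.mpr ⟨hia, hi⟩
            simp [hv, hia, hxs i hie, Function.update_of_ne hia]
        · -- values off s
          intro i hi
          have hia : i ≠ a := fun h => hi (h ▸ ha)
          have hie : i ∉ s.erase a := fun h => hi (Finset.mem_of_mem_erase h)
          simp [hv, hia, hxo i hie]
      -- W is a convex combination of the z a
      have hcomb : Wfun p s = ∑ a ∈ s, (p a / S) • z a := by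
        funext i
        have hsum : (∑ a ∈ s, (p a / S) • z a) i = ∑ a ∈ s, (p a * z a i) / S := by
          rw [Finset.sum_apply]
          exact Finset.sum_congr rfl fun a _ => by
            simp [Pi.smul_apply, smul_eq_mul, div_mul_eq_mul_div]
        rw [hsum, ← Finset.sum_div]
        by_cases hi : i ∈ s
        · -- main computation
          set t := s.erase i with ht
          set q : Fin m → ℝ := fun a => p i / (p i + p a) with hq
          have hW : Wfun p s i = ∑ j ∈ t, q j := by simp only [Wfun, if_pos hi]; rfl
          have hzii : z i i = ((s.card - 1 : ℕ) : ℝ) := by simp [hz]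
          have hzai : ∀ a ∈ t, z a i = (∑ j ∈ t, q j) - q a := by
            intro a hat
            have hai : a ≠ i := (Finset.mem_erase.mp hat).1
            have hia : i ≠ a := fun h => hai h.symm
            have his : i ∈ s.erase a :=
              Finset.mem_erase.mpr ⟨hia, hi⟩
            have hcomm : (s.erase a).erase i = t.erase a := by
              rw [ht, Finset.erase_right_comm]
            have : z a i = ∑ j ∈ (s.erase a).erase i, q j := by
              simp only [hz, if_neg hia, Wfun, if_pos his]; rfl
            rw [this, hcomm]
            have hat' : a ∈ t := hat
            rw [eq_sub_iff_add_eq, Finset.sum_erase_add t q hat']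
          have hsplit : ∑ a ∈ s, p a * z a i
              = p i * z i i + ∑ a ∈ t, p a * z a i :=
            (Finset.add_sum_erase s (fun a => p a * z a i) hi).symm
          have hterm : ∀ a ∈ t, p a * q a = p i - p i * q a := by
            intro a _
            rw [hq]
            field_simp [hpp i a]
            ring
          have hcardt : (t.card : ℝ) = ((s.card - 1 : ℕ) : ℝ) := by
            rw [ht, Finset.card_erase_of_mem hi]
          have hsum2 : ∑ a ∈ t, p a * z a i
              = (∑ a ∈ t, p a) * (∑ j ∈ t, q j) - (t.card * p i - p i * ∑ j ∈ t, q j) := by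
            rw [Finset.sum_congr rfl (fun a ha => by rw [hzai a ha])]
            rw [Finset.sum_congr rfl
              (fun a ha => (mul_sub (p a) (∑ j ∈ t, q j) (q a) : _))]
            rw [Finset.sum_sub_distrib, ← Finset.sum_mul]
            congr 1
            rw [Finset.sum_congr rfl hterm, Finset.sum_sub_distrib,
              Finset.sum_const, ← Finset.mul_sum, nsmul_eq_mul]
          have hSsplit : S = p i + ∑ a ∈ t, p a :=
            (Finset.add_sum_erase s p hi).symm
          rw [hsplit, hzii, hsum2, ← hcardt, hW, eq_div_iff hS.ne', hSsplit]
          ring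
        · -- i off s : both sides 0
          have hz0 : ∀ a ∈ s, p a * z a i = 0 := by
            intro a ha
            have hia : i ≠ a := fun h => hi (h ▸ ha)
            have hie : i ∉ s.erase a := fun h => hi (Finset.mem_of_mem_erase h)
            simp [hz, hia, Wfun, hie, hi]
          rw [Finset.sum_congr rfl hz0, Finset.sum_const, smul_zero, zero_div]
          simp [Wfun, hi]
      rw [hcomb]
      refine (convex_convexHull ℝ (permSet s)).sum_mem
        (fun a _ => div_nonneg (hp a).le hS.le) ?_ (fun a ha => hzmem a ha)
      rw [← Finset.sum_div, div_self hS.ne']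

/-- The point `W(p)` with `W_i(p) = ∑_{j≠i} p_i/(p_i+p_j)` lies in the permutohedron
`P_{m-1}` and its coordinates sum to `m(m-1)/2`. -/
theorem stmt_18 (m : ℕ) (hm : 2 ≤ m) (p : Fin m → ℝ)
    (hp : ∀ i, 0 < p i) (hps : ∑ i, p i = 1)
    (W : Fin m → ℝ)
    (hW : ∀ i, W i = ∑ j ∈ Finset.univ \ {i}, p i / (p i + p j)) :
    W ∈ convexHull ℝ {x : Fin m → ℝ |
        ∃ σ : Equiv.Perm (Fin m), ∀ i, x i = ((σ i : ℕ) : ℝ)} ∧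
      ∑ i, W i = m * (m - 1) / 2 := by
  have hpp : ∀ i j : Fin m, p i + p j ≠ 0 := fun i j => (add_pos (hp i) (hp j)).ne'
  constructor
  · have hWeq : W = Wfun p Finset.univ := by
      funext i
      rw [hW i, Wfun]
      simp [Finset.erase_eq]
    have hmem := key p hp (Finset.univ : Finset (Fin m))
    rw [← hWeq] at hmem
    refine convexHull_mono ?_ hmem
    rintro x ⟨f, hbij, hxs, -⟩
    have hfm : ∀ i, f i < m := by
      intro i
      have := hbij.mapsTo (by simp : (i : Fin m) ∈ (↑(Finset.univ : Finset (Fin m)) : Set (Fin m)))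
      simpa using this
    set g : Fin m → Fin m := fun i => ⟨f i, hfm i⟩ with hg
    have hginj : Function.Injective g := by
      intro i j h
      apply hbij.injOn (by simp) (by simp)
      have := congrArg (Fin.val) h
      simpa [hg] using this
    refine ⟨Equiv.ofBijective g (Finite.injective_iff_bijective.mp hginj), fun i => ?_⟩
    rw [hxs i (Finset.mem_univ i)]
    simp [Equiv.ofBijective, hg]
  · -- sum identity
    set g : Fin m → Fin m → ℝ := fun i j => if i = j then 0 else p i / (p i + p j) with hg
    have hWs : ∀ i, W i = ∑ j, g i j := by
      intro i
      rw [hW i, ← Finset.add_sum_erase Finset.univ (g i) (Finset.mem_univ i)]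
      have : g i i = 0 := by simp [hg]
      rw [this, zero_add, Finset.erase_eq]
      exact Finset.sum_congr rfl fun j hj => by
        have : i ≠ j := fun h => by
          simp [h] at hj
        simp [hg, this]
    have hgsum : ∀ i j, g i j + g j i = if i = j then 0 else 1 := by
      intro i j
      rcases eq_or_ne i j with rfl | hij
      · simp [hg]
      · simp only [hg, if_neg hij, if_neg hij.symm]
        rw [add_comm (p j) (p i)]
        rw [← add_div, div_self (hpp i j)]
    have h2 : (2 : ℝ) * ∑ i, W i = m * (m - 1) := by
      have hcomm : ∑ i, ∑ j, g j i = ∑ i, ∑ j, g i j := Finset.sum_comm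
      calc (2 : ℝ) * ∑ i, W i
          = ∑ i, ∑ j, g i j + ∑ i, ∑ j, g j i := by
            rw [hcomm]; rw [Finset.sum_congr rfl fun i _ => hWs i]; ring
        _ = ∑ i : Fin m, ∑ j : Fin m, (g i j + g j i) := by
            rw [← Finset.sum_add_distrib]
            exact Finset.sum_congr rfl fun i _ => (Finset.sum_add_distrib).symm
        _ = ∑ i : Fin m, ∑ j : Fin m, (if i = j then (0:ℝ) else 1) :=
            Finset.sum_congr rfl fun i _ => Finset.sum_congr rfl fun j _ => hgsum i j
        _ = ∑ i : Fin m, ((m : ℝ) - 1) := by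
            refine Finset.sum_congr rfl fun i _ => ?_
            rw [← Finset.add_sum_erase Finset.univ _ (Finset.mem_univ i)]
            rw [if_pos rfl, zero_add]
            have : ∀ j ∈ Finset.univ.erase i, (if i = j then (0:ℝ) else 1) = 1 := by
              intro j hj
              have : i ≠ j := fun h => by simp [h] at hj
              simp [this]
            rw [Finset.sum_congr rfl this, Finset.sum_const,
              Finset.card_erase_of_mem (Finset.mem_univ i)]
            simp only [Finset.card_univ, Fintype.card_fin, nsmul_eq_mul, mul_one]
            have : 1 ≤ m := by omega
            push_cast [this]
            ring
        _ = m * (m - 1) := by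
            rw [Finset.sum_const, Finset.card_univ, Fintype.card_fin, nsmul_eq_mul]
    linarith
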